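/- If all edge weights a_{ij} of the bilinear function f(x) = Σ_{ij∈E} a_{ij} x_i x_j are positive, then the concave envelope of f over [0,1]^n satisfies cav[f](x) = Σ_{ij∈E} a_{ij} min{x_i, x_j} for every x ∈ [0,1]^n. -/
import Mathlib


open MeasureTheory Set

private lemma sum_ite_le (f : ℕ → ℝ) (N m : ℕ) (h : m < N) :
    ∑ k ∈ Finset.range N, (if k ≤ m then f k else 0) = ∑ k ∈ Finset.range (m+1), f k := by
  rw [← Finset.sum_subset (Finset.range_subset_range.2 h)]
  · apply Finset.sum_congr rfl
    intro k hk
    rw [if_pos (by simpa [Nat.lt_succ_iff] using Finset.mem_range.1 hk)]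
  · intro k _ hk
    rw [if_neg (by simpa [Nat.lt_succ_iff] using fun h' => hk (Finset.mem_range.2 (Nat.lt_succ_of_le h')))]

/-- If all edge weights of the bilinear function `f(x) = ∑_{ij ∈ E} a_{ij} x_i x_j`
are positive, then its concave envelope over `[0,1]^n` is
`cav[f](x) = ∑_{ij ∈ E} a_{ij} min{x_i, x_j}`. -/
theorem stmt2 (n : ℕ) (E : Finset (Fin n × Fin n)) (hE : ∀ e ∈ E, e.1 < e.2)
    (a : Fin n × Fin n → ℝ) (ha : ∀ e ∈ E, 0 < a e)
    (x : Fin n → ℝ) (hx : ∀ i, x i ∈ Set.Icc (0:ℝ) 1) :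
    sSup {z : ℝ | (x, z) ∈ convexHull ℝ
        {p : (Fin n → ℝ) × ℝ | (∀ i, p.1 i = 0 ∨ p.1 i = 1) ∧
          p.2 = ∑ e ∈ E, a e * p.1 e.1 * p.1 e.2}}
      = ∑ e ∈ E, a e * min (x e.1) (x e.2) := by
  classical
  set V : Set ((Fin n → ℝ) × ℝ) := {p : (Fin n → ℝ) × ℝ | (∀ i, p.1 i = 0 ∨ p.1 i = 1) ∧
          p.2 = ∑ e ∈ E, a e * p.1 e.1 * p.1 e.2} with hVdef
  set g : ℝ := ∑ e ∈ E, a e * min (x e.1) (x e.2) with hgdef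
  -- Upper bound
  have hub : ∀ z ∈ {z : ℝ | (x, z) ∈ convexHull ℝ V}, z ≤ g := by
    intro z hz
    set C : Set ((Fin n → ℝ) × ℝ) :=
      {p : (Fin n → ℝ) × ℝ | p.2 ≤ ∑ e ∈ E, a e * min (p.1 e.1) (p.1 e.2)} with hCdef
    have hC : Convex ℝ C := by
      intro p hp q hq α β hα hβ hαβ
      simp only [hCdef, Set.mem_setOf_eq] at hp hq ⊢
      have h2 : (α • p + β • q).2 = α * p.2 + β * q.2 := rfl
      rw [h2]
      calc α * p.2 + β * q.2
          ≤ α * (∑ e ∈ E, a e * min (p.1 e.1) (p.1 e.2))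
            + β * (∑ e ∈ E, a e * min (q.1 e.1) (q.1 e.2)) := by
            gcongr
        _ = ∑ e ∈ E, (α * (a e * min (p.1 e.1) (p.1 e.2))
              + β * (a e * min (q.1 e.1) (q.1 e.2))) := by
            rw [Finset.mul_sum, Finset.mul_sum, ← Finset.sum_add_distrib]
        _ ≤ ∑ e ∈ E, a e * min ((α • p + β • q).1 e.1) ((α • p + β • q).1 e.2) := by
            apply Finset.sum_le_sum
            intro e he
            have h1 : (α • p + β • q).1 e.1 = α * p.1 e.1 + β * q.1 e.1 := rfl
            have h1' : (α • p + β • q).1 e.2 = α * p.1 e.2 + β * q.1 e.2 := rfl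
            rw [h1, h1']
            have hae := (ha e he).le
            have hmin : α * min (p.1 e.1) (p.1 e.2) + β * min (q.1 e.1) (q.1 e.2)
                ≤ min (α * p.1 e.1 + β * q.1 e.1) (α * p.1 e.2 + β * q.1 e.2) := by
              apply le_min
              · gcongr
                exacts [min_le_left _ _, min_le_left _ _]
              · gcongr
                exacts [min_le_right _ _, min_le_right _ _]
            nlinarith [hmin]
    have hVC : V ⊆ C := by
      intro p hp
      simp only [hVdef, Set.mem_setOf_eq] at hp
      simp only [hCdef, Set.mem_setOf_eq]
      rw [hp.2]
      apply le_of_eq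
      apply Finset.sum_congr rfl
      intro e _
      rcases hp.1 e.1 with h1 | h1 <;> rcases hp.1 e.2 with h2 | h2 <;>
        simp [h1, h2]
    have := convexHull_min hVC hC hz
    simpa [hCdef, hgdef] using this
  -- Lower bound: construct the convex combination
  set σ : Equiv.Perm (Fin n) := Tuple.sort x with hσ
  set y : Fin n → ℝ := x ∘ σ with hy
  have hymono : Monotone y := Tuple.monotone_sort x
  have hy01 : ∀ i : Fin n, 0 ≤ y i ∧ y i ≤ 1 := fun i => ⟨(hx _).1, (hx _).2⟩
  set Y : ℕ → ℝ := fun k => if hk : k = 0 then 0 else if h : k ≤ n then y ⟨k-1, by omega⟩ else 1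
    with hYdef
  have hY0 : Y 0 = 0 := by simp [hYdef]
  have hYtop : Y (n+1) = 1 := by
    simp only [hYdef]
    rw [dif_neg (by omega : ¬(n+1 = 0)), dif_neg (by omega : ¬(n+1 ≤ n))]
  have hYval : ∀ i : Fin n, Y ((i : ℕ)+1) = y i := by
    intro i
    have hi : (i : ℕ) < n := i.2
    have h0 : ¬((i : ℕ)+1 = 0) := by omega
    have h1 : (i : ℕ)+1 ≤ n := by omega
    simp only [hYdef]
    rw [dif_neg h0, dif_pos h1]
    congr 1
  have hYmono : Monotone Y := by
    intro j k hjk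
    rcases Nat.eq_zero_or_pos j with hj | hj
    · subst hj
      rw [hY0]
      simp only [hYdef]
      split_ifs
      all_goals first | exact le_refl 0 | exact (hy01 _).1 | exact zero_le_one
    · have hj0 : ¬(j = 0) := by omega
      have hk0 : ¬(k = 0) := by omega
      by_cases hkn : k ≤ n
      · have hjn : j ≤ n := le_trans hjk hkn
        simp only [hYdef]
        rw [dif_neg hj0, dif_neg hk0, dif_pos hjn, dif_pos hkn]
        exact hymono (by rw [Fin.mk_le_mk]; omega)
      · simp only [hYdef]
        rw [dif_neg hj0, dif_neg hk0, dif_neg hkn]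
        by_cases hjn : j ≤ n
        · rw [dif_pos hjn]; exact (hy01 _).2
        · rw [dif_neg hjn]
  set w : ℕ → ℝ := fun k => Y (k+1) - Y k with hwdef
  have hwnn : ∀ k, 0 ≤ w k := fun k => sub_nonneg.2 (hYmono (Nat.le_succ k))
  have hwsum : ∑ k ∈ Finset.range (n+1), w k = 1 := by
    rw [hwdef]
    rw [Finset.sum_range_sub Y (n+1), hY0, hYtop, sub_zero]
  have hpart : ∀ m : ℕ, m ≤ n →
      ∑ k ∈ Finset.range (n+1), (if k ≤ m then w k else 0) = Y (m+1) := by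
    intro m hm
    rw [sum_ite_le w (n+1) m (by omega), hwdef, Finset.sum_range_sub Y (m+1), hY0, sub_zero]
  set v : ℕ → (Fin n → ℝ) := fun k i => if k ≤ ((σ.symm i : Fin n) : ℕ) then 1 else 0 with hvdef
  have hxv : ∀ i : Fin n, ∑ k ∈ Finset.range (n+1), w k * v k i = x i := by
    intro i
    have : ∀ k, w k * v k i = if k ≤ ((σ.symm i : Fin n) : ℕ) then w k else 0 := by
      intro k; simp only [hvdef]; split_ifs <;> ring
    simp only [this]
    rw [hpart _ (by have := (σ.symm i).2; omega), hYval (σ.symm i)]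
    simp [hy]
  have hminv : ∀ i j : Fin n,
      ∑ k ∈ Finset.range (n+1), w k * (v k i * v k j) = min (x i) (x j) := by
    intro i j
    set mi : ℕ := ((σ.symm i : Fin n) : ℕ) with hmi
    set mj : ℕ := ((σ.symm j : Fin n) : ℕ) with hmj
    have : ∀ k, w k * (v k i * v k j) = if k ≤ min mi mj then w k else 0 := by
      intro k; simp only [hvdef, ← hmi, ← hmj]
      by_cases h1 : k ≤ mi <;> by_cases h2 : k ≤ mj
      · rw [if_pos h1, if_pos h2, if_pos (le_min h1 h2)]; ring
      · rw [if_pos h1, if_neg h2, if_neg (fun h => h2 (h.trans (min_le_right _ _)))]; ring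
      · rw [if_neg h1, if_pos h2, if_neg (fun h => h1 (h.trans (min_le_left _ _)))]; ring
      · rw [if_neg h1, if_neg h2, if_neg (fun h => h1 (h.trans (min_le_left _ _)))]; ring
    simp only [this]
    rw [hpart _ (by have := (σ.symm i).2; have := (σ.symm j).2; omega)]
    have h1 : min mi mj + 1 = min (mi + 1) (mj + 1) := by omega
    rw [h1, hYmono.map_min, hYval (σ.symm i), hYval (σ.symm j)]
    have hi' : y (σ.symm i) = x i := by simp [hy]
    have hj' : y (σ.symm j) = x j := by simp [hy]
    rw [hi', hj']
  have hmem : (x, g) ∈ convexHull ℝ V := by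
    have hcomb := (convex_convexHull ℝ V).sum_mem (t := Finset.range (n+1)) (w := w)
      (z := fun k => ((v k, ∑ e ∈ E, a e * v k e.1 * v k e.2) : (Fin n → ℝ) × ℝ))
      (fun k _ => hwnn k) hwsum
      (fun k _ => subset_convexHull ℝ V (by
        constructor
        · intro i; simp only [hvdef]; split_ifs <;> simp
        · rfl))
    have heq : ∑ k ∈ Finset.range (n+1),
        w k • ((v k, ∑ e ∈ E, a e * v k e.1 * v k e.2) : (Fin n → ℝ) × ℝ) = (x, g) := by
      rw [Prod.ext_iff]
      constructor
      · rw [Prod.fst_sum]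
        funext i
        rw [Finset.sum_apply]
        simp only [Prod.smul_fst, Pi.smul_apply, smul_eq_mul]
        exact hxv i
      · rw [Prod.snd_sum]
        simp only [Prod.smul_snd, smul_eq_mul]
        calc ∑ k ∈ Finset.range (n+1), w k * ∑ e ∈ E, a e * v k e.1 * v k e.2
            = ∑ k ∈ Finset.range (n+1), ∑ e ∈ E, a e * (w k * (v k e.1 * v k e.2)) := by
              apply Finset.sum_congr rfl
              intro k _
              rw [Finset.mul_sum]
              apply Finset.sum_congr rfl
              intro e _; ring
          _ = ∑ e ∈ E, ∑ k ∈ Finset.range (n+1), a e * (w k * (v k e.1 * v k e.2)) :=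
              Finset.sum_comm
          _ = ∑ e ∈ E, a e * min (x e.1) (x e.2) := by
              apply Finset.sum_congr rfl
              intro e _
              rw [← Finset.mul_sum, hminv]
          _ = g := rfl
    rwa [heq] at hcomb
  have hmemS : g ∈ {z : ℝ | (x, z) ∈ convexHull ℝ V} := hmem
  exact le_antisymm (csSup_le ⟨g, hmemS⟩ hub) (le_csSup ⟨g, hub⟩ hmemS)
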